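/- Let D be a finite set of defaults containing both the default (a,b) and the default (b,c). If the formulas a and b have the same finite rank with respect to D, then (a,c) belongs to the lexicographic closure D^l of D. -/
import Mathlib


open Set

/-- A default is a pair `(a, b)` of formulas, a formula being a set of models. -/
abbrev Default (M : Type*) := Set M × Set M

variable {M : Type*}

/-- The model `m` violates the default `d = (a, b)` iff `m ∈ a \ b`. -/
def Violates (m : M) (d : Default M) : Prop := m ∈ d.1 \ d.2

/-- The formula `c` is consistent with `B̃`, the set of material counterparts of the
defaults in `B`, iff `c ∩ ⋂ B̃ ≠ ∅`. -/
def ConsistentWith (c : Set M) (B : Set (Default M)) : Prop :=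
  (c ∩ ⋂ d ∈ B, (d.1ᶜ ∪ d.2)).Nonempty

/-- `B̃, c ⊨ d` : every model of `c` together with all material counterparts of `B`
is a model of `d`. -/
def EntailsWith (B : Set (Default M)) (c d : Set M) : Prop :=
  c ∩ ⋂ e ∈ B, (e.1ᶜ ∪ e.2) ⊆ d

/-- The level of the model `m` : the number of defaults of `D` violated by `m`. -/
noncomputable def level (D : Set (Default M)) (m : M) : ℕ :=
  {d ∈ D | Violates m d}.ncard

/-- `F` is a maxbase of `D` for `c` : `F ⊆ D`, `c` is consistent with `F̃`, and no
subset of `D` of strictly larger cardinality has its material counterparts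
consistent with `c`. -/
def Maxbase (D : Set (Default M)) (c : Set M) (F : Set (Default M)) : Prop :=
  F ⊆ D ∧ ConsistentWith c F ∧
    ∀ F' : Set (Default M), F' ⊆ D → F.ncard < F'.ncard → ¬ ConsistentWith c F'

/-- `E₀ = D`, `E_{i+1} = {(a,b) ∈ E_i | a is not consistent with Ẽ_i}`. -/
def Ee (D : Set (Default M)) : ℕ → Set (Default M)
  | 0 => D
  | (i + 1) => {d ∈ Ee D i | ¬ ConsistentWith d.1 (Ee D i)}

/-- `c` has rank `i` with respect to `D` : `i` is the least natural number such that
`c` is consistent with `Ẽ_i`. -/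
def HasRank (D : Set (Default M)) (c : Set M) (i : ℕ) : Prop :=
  ConsistentWith c (Ee D i) ∧ ∀ j < i, ¬ ConsistentWith c (Ee D j)

/-- `D_i = E_i \ E_{i+1}`. -/
def Dlev (D : Set (Default M)) (i : ℕ) : Set (Default M) := Ee D i \ Ee D (i + 1)

/-- `D_∞ = ⋂_i E_i`. -/
def Dinf (D : Set (Default M)) : Set (Default M) := ⋂ i, Ee D i

/-- `k` is the order of `D` : the least `k` such that `D_i = ∅` for every finite `i ≥ k`. -/
def IsOrder (D : Set (Default M)) (k : ℕ) : Prop :=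
  (∀ i, k ≤ i → Dlev D i = ∅) ∧ ∀ k', (∀ i, k' ≤ i → Dlev D i = ∅) → k ≤ k'

/-- The `(k+1)`-tuple associated to `X ⊆ D` : `n₀ = |D_∞ ∩ X|` and
`n_i = |D_{k-i} ∩ X|` for `1 ≤ i ≤ k`. -/
noncomputable def tup (D : Set (Default M)) (k : ℕ) (X : Set (Default M)) (i : ℕ) : ℕ :=
  if i = 0 then (Dinf D ∩ X).ncard else (Dlev D (k - i) ∩ X).ncard

/-- The seriousness ordering : `X ≺ Y` iff the tuple of `X` is lexicographically
smaller than the tuple of `Y`. -/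
def Serious (D : Set (Default M)) (k : ℕ) (X Y : Set (Default M)) : Prop :=
  ∃ j ≤ k, (∀ i < j, tup D k X i = tup D k Y i) ∧ tup D k X j < tup D k Y j

/-- `V(m)` : the set of defaults of `D` violated by the model `m`. -/
def Vset (D : Set (Default M)) (m : M) : Set (Default M) := {d ∈ D | Violates m d}

/-- The lexicographic closure `D^l` : `(a,b) ∈ D^l` iff every model of `a` that is
`≺`-minimal among the models of `a` satisfies `b` (models being compared via the
seriousness ordering of the sets of defaults they violate). -/
def LexClos (D : Set (Default M)) (k : ℕ) (a b : Set M) : Prop :=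
  ∀ m ∈ a, (∀ m' ∈ a, ¬ Serious D k (Vset D m') (Vset D m)) → m ∈ b

/-- `B` is a basis for `a` : `B ⊆ D`, `a` is consistent with `B̃`, and there is no
`B' ⊆ D` whose material counterparts are consistent with `a` and with `B ≺ B'`. -/
def LexBasis (D : Set (Default M)) (k : ℕ) (a : Set M) (B : Set (Default M)) : Prop :=
  B ⊆ D ∧ ConsistentWith a B ∧
    ∀ B' : Set (Default M), B' ⊆ D → ConsistentWith a B' → ¬ Serious D k B B'

/-- The rational closure of `D` : the pairs `(a,b)` such that either `a` has no rank,
or the rank of `a` is strictly smaller than the rank of `a ∩ bᶜ` (where `no rank`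
counts as larger than every natural number). -/
def RatClos (D : Set (Default M)) (a b : Set M) : Prop :=
  (¬ ∃ i, HasRank D a i) ∨
    ∃ i, HasRank D a i ∧
      ((¬ ∃ j, HasRank D (a ∩ bᶜ) j) ∨ ∃ j, HasRank D (a ∩ bᶜ) j ∧ i < j)

/-- `ℓ(X) = l` : `l` is the least index `i ≤ k` with `tup X i ≠ 0`, and `l = k + 1`
if the tuple of `X` is all zero. -/
def EllIs (D : Set (Default M)) (k : ℕ) (X : Set (Default M)) (l : ℕ) : Prop :=
  (l ≤ k ∧ tup D k X l ≠ 0 ∧ ∀ i < l, tup D k X i = 0) ∨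
    (l = k + 1 ∧ ∀ i ≤ k, tup D k X i = 0)

/-- `X ≪ Y` iff `ℓ(X) > ℓ(Y)`. -/
def Ll (D : Set (Default M)) (k : ℕ) (X Y : Set (Default M)) : Prop :=
  ∃ lx ly, EllIs D k X lx ∧ EllIs D k Y ly ∧ ly < lx

lemma Ee_succ_subset (D : Set (Default M)) (i : ℕ) : Ee D (i + 1) ⊆ Ee D i :=
  fun _ hd => hd.1

lemma Ee_antitone (D : Set (Default M)) {i j : ℕ} (h : i ≤ j) : Ee D j ⊆ Ee D i := by
  induction j with
  | zero => simp_all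
  | succ n ih =>
    rcases Nat.lt_or_ge i (n + 1) with h' | h'
    · exact (Ee_succ_subset D n).trans (ih (Nat.lt_succ_iff.mp h'))
    · have : i = n + 1 := le_antisymm h h'
      subst this; exact subset_rfl

lemma mem_Ee_of_norank {D : Set (Default M)} {d : Default M} (hd : d ∈ D) (i : ℕ)
    (h : ∀ j < i, ¬ ConsistentWith d.1 (Ee D j)) : d ∈ Ee D i := by
  induction i with
  | zero => exact hd
  | succ n ih =>
    exact ⟨ih (fun j hj => h j (hj.trans (Nat.lt_succ_self n))), h n (Nat.lt_succ_self n)⟩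

lemma mem_Dinf_or_Dlev {D : Set (Default M)} {d : Default M} {i : ℕ} (hd : d ∈ Ee D i) :
    d ∈ Dinf D ∨ ∃ l, i ≤ l ∧ d ∈ Dlev D l := by
  classical
  by_cases h : ∀ j, d ∈ Ee D j
  · exact Or.inl (mem_iInter.mpr h)
  · push_neg at h
    right
    have hfind : d ∉ Ee D (Nat.find h) := Nat.find_spec h
    have hn0 : Nat.find h ≠ 0 := by
      intro h0
      exact hfind (h0 ▸ Ee_antitone D (Nat.zero_le i) hd)
    obtain ⟨l, hl⟩ := Nat.exists_eq_succ_of_ne_zero hn0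
    have hdl : d ∈ Ee D l := by
      by_contra hc
      exact Nat.find_min h (by omega) hc
    have hil : i ≤ l := by
      by_contra hc
      push_neg at hc
      exact hfind (hl ▸ Ee_antitone D (by omega) hd)
    rw [hl] at hfind
    exact ⟨l, hil, hdl, hfind⟩

lemma tup_zero (D : Set (Default M)) (k : ℕ) (X : Set (Default M)) :
    tup D k X 0 = (Dinf D ∩ X).ncard := by simp [tup]

lemma tup_ne_zero (D : Set (Default M)) (k : ℕ) (X : Set (Default M)) {j : ℕ} (hj : j ≠ 0) :
    tup D k X j = (Dlev D (k - j) ∩ X).ncard := by simp [tup, hj]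

lemma Ee_stab {D : Set (Default M)} {k : ℕ} (hk : ∀ i, k ≤ i → Dlev D i = ∅)
    {j : ℕ} (h : k ≤ j) : Ee D j = Ee D k := by
  induction j with
  | zero => rw [Nat.le_zero.mp h]
  | succ n ih =>
    rcases Nat.lt_or_ge k (n + 1) with h' | h'
    · have hkn : k ≤ n := Nat.lt_succ_iff.mp h'
      have heq : Ee D (n + 1) = Ee D n := by
        apply Set.Subset.antisymm (Ee_succ_subset D n)
        intro d hd
        by_contra hc
        have : d ∈ Dlev D n := ⟨hd, hc⟩
        rw [hk n hkn] at this
        exact this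
      rw [heq]; exact ih hkn
    · have : k = n + 1 := le_antisymm h h'
      rw [this]

/-- Transitivity for defaults of equal rank: if `(a,b) ∈ D`, `(b,c) ∈ D` and `a`, `b`
have the same finite rank, then `(a,c)` belongs to the lexicographic closure of `D`. -/
theorem lexClos_transitivity_equal_rank
    (D : Set (Default M)) (hD : D.Finite) (k : ℕ) (hk : IsOrder D k)
    (a b c : Set M) (hab : (a, b) ∈ D) (hbc : (b, c) ∈ D)
    (i : ℕ) (ha : HasRank D a i) (hb : HasRank D b i) :
    LexClos D k a c := by
  classical
  intro m hma hmin
  -- i ≤ k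
  have hik : i ≤ k := by
    by_contra h
    push_neg at h
    exact ha.2 k h ((Ee_stab hk.1 h.le) ▸ ha.1)
  -- a witness model consistent with Ẽᵢ
  obtain ⟨m', hm'⟩ := ha.1
  have hm'a : m' ∈ a := hm'.1
  have hm'E : ∀ e ∈ Ee D i, ¬ Violates m' e := by
    intro e he hv
    have h2 := hm'.2
    simp only [mem_iInter] at h2
    rcases h2 e he with h | h
    · exact h hv.1
    · exact hv.2 h
  -- key claim : m violates no default of Eᵢ
  have hclaim : ∀ d ∈ Ee D i, ¬ Violates m d := by
    intro d hdE hdv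
    apply hmin m' hm'a
    have hdD : d ∈ D := Ee_antitone D (Nat.zero_le i) hdE
    have hdV : d ∈ Vset D m := ⟨hdD, hdv⟩
    -- the tuple of V(m') vanishes on the serious coordinates
    have hz : ∀ j ≤ k - i, tup D k (Vset D m') j = 0 := by
      intro j hj
      have hsub : ∀ (S : Set (Default M)), S ⊆ Ee D i → (S ∩ Vset D m') = ∅ := by
        intro S hS
        ext x
        simp only [mem_inter_iff, mem_empty_iff_false, iff_false, not_and]
        intro hxS hxV
        exact hm'E x (hS hxS) hxV.2
      by_cases h0 : j = 0
      · rw [h0, tup_zero,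
          hsub (Dinf D) (fun x hx => (mem_iInter.mp hx) i), Set.ncard_empty]
      · rw [tup_ne_zero _ _ _ h0]
        have hikj : i ≤ k - j := by omega
        have hsub2 : Dlev D (k - j) ⊆ Ee D i := fun x hx => Ee_antitone D hikj hx.1
        rw [hsub _ hsub2, Set.ncard_empty]
    -- the tuple of V(m) is nonzero at some serious coordinate
    have hex : ∃ j, j ≤ k - i ∧ tup D k (Vset D m) j ≠ 0 := by
      have hne : ∀ (S : Set (Default M)), S ⊆ D → d ∈ S → S.ncard ≠ 0 := by
        intro S hS hdS
        intro h
        rw [Set.ncard_eq_zero (hD.subset hS)] at h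
        rw [h] at hdS
        exact hdS
      rcases mem_Dinf_or_Dlev hdE with h | ⟨l, hil, hdl⟩
      · refine ⟨0, Nat.zero_le _, ?_⟩
        rw [tup_zero]
        exact hne _ (fun x hx => hx.2.1) ⟨h, hdV⟩
      · have hlk : l < k := by
          by_contra hc
          push_neg at hc
          have := hk.1 l hc
          rw [this] at hdl
          exact hdl
        refine ⟨k - l, by omega, ?_⟩
        rw [tup_ne_zero _ _ _ (by omega : k - l ≠ 0), (by omega : k - (k - l) = l)]
        exact hne _ (fun x hx => hx.2.1) ⟨hdl, hdV⟩
    -- take the least such coordinate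
    refine ⟨Nat.find hex, (Nat.find_spec hex).1.trans (Nat.sub_le k i), ?_, ?_⟩
    · intro i' hi'
      have h1 : tup D k (Vset D m) i' = 0 := by
        by_contra hc
        exact Nat.find_min hex hi' ⟨le_of_lt (lt_of_lt_of_le hi' (Nat.find_spec hex).1), hc⟩
      rw [h1, hz i' (le_trans hi'.le (Nat.find_spec hex).1)]
    · rw [hz _ (Nat.find_spec hex).1]
      exact Nat.pos_of_ne_zero (Nat.find_spec hex).2
  -- conclude
  have hab' : (a, b) ∈ Ee D i := mem_Ee_of_norank hab i (fun j hj => ha.2 j hj)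
  have hbc' : (b, c) ∈ Ee D i := mem_Ee_of_norank hbc i (fun j hj => hb.2 j hj)
  have hmb : m ∈ b := by
    by_contra hmb
    exact hclaim _ hab' ⟨hma, hmb⟩
  by_contra hmc
  exact hclaim _ hbc' ⟨hmb, hmc⟩
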